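/- Let $p$ be a prime and let $s \in \mathbb{N}$ with $\delta_p(s) < p - 1$, where $\delta_p$ is the base-$p$ digit sum. Choose $t \in \mathbb{N}$ with $s < p^t$ and define $k_m := s + (p - 1 - \delta_p(s)) \cdot p^{m+t}$ for $m \ge 1$. Then each $k_m$ satisfies $\delta_p(k_m) = p - 1$; moreover $k_m \to \infty$ in $\mathbb{R}$ and $k_m \to s$ in $\mathbb{Z}_p$ as $m \to \infty$. -/

import Mathlib

open Filter

/-- Let `p` be a prime and `s ≥ 1` with base-`p` digit sum `δ_p(s) < p - 1`. Choose `t`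
with `s < p^t` and set `k_m = s + (p - 1 - δ_p(s)) p^{m+t}`. Then `δ_p(k_m) = p - 1` for
all `m ≥ 1`, `k_m → ∞`, and `k_m → s` in `ℚ_p`. -/
theorem weight_approximation (p : ℕ) [Fact p.Prime] (s : ℕ) (hs : 1 ≤ s)
    (hδ : (Nat.digits p s).sum < p - 1)
    (t : ℕ) (ht : s < p ^ t) :
    (∀ m : ℕ, 1 ≤ m →
      (Nat.digits p (s + (p - 1 - (Nat.digits p s).sum) * p ^ (m + t))).sum = p - 1) ∧
    Tendsto (fun m : ℕ => s + (p - 1 - (Nat.digits p s).sum) * p ^ (m + t)) atTop atTop ∧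
    Tendsto (fun m : ℕ =>
        ((s + (p - 1 - (Nat.digits p s).sum) * p ^ (m + t) : ℕ) : ℚ_[p]))
      atTop (nhds (s : ℚ_[p])) := by
  have hp : 1 < p := (Fact.out : p.Prime).one_lt
  set c := p - 1 - (Nat.digits p s).sum with hc
  have hc0 : 0 < c := Nat.sub_pos_of_lt hδ
  have hcp : c < p := lt_of_le_of_lt (Nat.sub_le _ _) (Nat.sub_lt (by omega) one_pos)
  have hlen : (Nat.digits p s).length ≤ t := by
    rw [Nat.digits_len p s hp (by omega)]
    have := (Nat.log_lt_iff_lt_pow hp (by omega : s ≠ 0)).mpr ht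
    omega
  have hdigc : Nat.digits p c = [c] := Nat.digits_def' hp hc0 ▸ by
    rw [Nat.mod_eq_of_lt hcp, Nat.div_eq_of_lt hcp, Nat.digits_zero]
  refine ⟨fun m hm => ?_, ?_, ?_⟩
  · have key := Nat.digits_append_zeroes_append_digits (b := p) (n := s)
      (k := m + t - (Nat.digits p s).length) (m := c) hp hc0
    have hexp : (Nat.digits p s).length + (m + t - (Nat.digits p s).length) = m + t := by
      omega
    rw [hexp] at key
    rw [mul_comm c, ← key]
    simp only [List.sum_append, List.sum_replicate, smul_zero, hdigc, List.sum_cons,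
      List.sum_nil, add_zero]
    omega
  · apply tendsto_atTop_mono (f := fun m : ℕ => m)
    · intro m
      calc (m : ℕ) ≤ p ^ (m + t) := le_of_lt (Nat.lt_pow_self (n := m + t) hp |>.trans_le'
        (by omega))
      _ ≤ c * p ^ (m + t) := Nat.le_mul_of_pos_left _ hc0
      _ ≤ s + c * p ^ (m + t) := Nat.le_add_left _ _
    · exact tendsto_natCast_atTop_atTop
  · have hnorm : ‖(p : ℚ_[p])‖ < 1 := Padic.norm_p_lt_one
    have h1 : Tendsto (fun m : ℕ => ((p : ℚ_[p]) ^ (m + t))) atTop (nhds 0) :=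
      (tendsto_pow_atTop_nhds_zero_of_norm_lt_one hnorm).comp (tendsto_add_atTop_nat t)
    have h2 : Tendsto (fun m : ℕ => (s : ℚ_[p]) + (c : ℚ_[p]) * (p : ℚ_[p]) ^ (m + t))
        atTop (nhds ((s : ℚ_[p]) + (c : ℚ_[p]) * 0)) :=
      tendsto_const_nhds.add (tendsto_const_nhds.mul h1)
    simp only [mul_zero, add_zero] at h2
    convert h2 using 2 with m
    push_cast
    ring
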